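/- arXiv:2509.16178 — 3 statements merged into one kernel-verified Lean document; each statement's English description precedes it below -/
import Mathlib

section
/- Let 0 < q < 1. Then ∏_{j ≥ 1} 1/(1 - q^j)^j ≤ exp( ∑_{j ≥ 1} j · q^j/(1 - q^j) ), and for any ε > 0 there is δ > 0 such that for all q with 1 - δ < q < 1 one has ∏_{j ≥ 1} (1 - q^j)^{-j} ≤ exp( (ζ(3) + ε)/(1-q)^2 ). -/
open Real

noncomputable def LL (q : ℝ) (j : ℕ) : ℝ := ((j : ℝ) + 1) * (-Real.log (1 - q ^ (j + 1)))

lemma hpow_pos {q : ℝ} (hq0 : 0 < q) (j : ℕ) : 0 < q ^ (j + 1) := pow_pos hq0 _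

lemma hpow_lt_one {q : ℝ} (hq0 : 0 < q) (hq1 : q < 1) (j : ℕ) : q ^ (j + 1) < 1 :=
  pow_lt_one₀ hq0.le hq1 (Nat.succ_ne_zero j)

lemma hsub_pos {q : ℝ} (hq0 : 0 < q) (hq1 : q < 1) (j : ℕ) : 0 < 1 - q ^ (j + 1) := by
  linarith [hpow_lt_one hq0 hq1 j]

lemma LL_nonneg {q : ℝ} (hq0 : 0 < q) (hq1 : q < 1) (j : ℕ) : 0 ≤ LL q j := by
  have h1 : Real.log (1 - q ^ (j + 1)) ≤ 0 :=
    Real.log_nonpos (by linarith [hsub_pos hq0 hq1 j]) (by linarith [hpow_pos hq0 j])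
  unfold LL
  have hj : (0:ℝ) ≤ (j : ℝ) + 1 := by positivity
  nlinarith

lemma LL_le {q : ℝ} (hq0 : 0 < q) (hq1 : q < 1) (j : ℕ) :
    LL q j ≤ ((j : ℝ) + 1) * q ^ (j + 1) / (1 - q ^ (j + 1)) := by
  have hs := hsub_pos hq0 hq1 j
  have hlog : Real.log ((1 - q ^ (j + 1))⁻¹) ≤ (1 - q ^ (j + 1))⁻¹ - 1 :=
    Real.log_le_sub_one_of_pos (by positivity)
  rw [Real.log_inv] at hlog
  have heq : (1 - q ^ (j + 1))⁻¹ - 1 = q ^ (j + 1) / (1 - q ^ (j + 1)) := by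
    field_simp
    ring
  rw [heq] at hlog
  have hj : (0:ℝ) ≤ (j : ℝ) + 1 := by positivity
  unfold LL
  rw [mul_div_assoc]
  exact mul_le_mul_of_nonneg_left hlog hj

lemma summable_b {q : ℝ} (hq0 : 0 < q) (hq1 : q < 1) :
    Summable (fun j : ℕ => ((j : ℝ) + 1) * q ^ (j + 1) / (1 - q)) := by
  have h1 : Summable (fun n : ℕ => (n : ℝ) * q ^ n) :=
    (hasSum_coe_mul_geometric_of_norm_lt_one
      (by rw [Real.norm_eq_abs, abs_of_pos hq0]; exact hq1)).summable
  have h2 : Summable (fun n : ℕ => ((n + 1 : ℕ) : ℝ) * q ^ (n + 1)) :=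
    (summable_nat_add_iff 1).mpr h1
  have h3 : Summable (fun n : ℕ => ((n : ℝ) + 1) * q ^ (n + 1)) := by
    simpa using h2
  simpa [div_eq_mul_inv] using h3.mul_right (1 - q)⁻¹

lemma a_nonneg {q : ℝ} (hq0 : 0 < q) (hq1 : q < 1) (j : ℕ) :
    0 ≤ ((j : ℝ) + 1) * q ^ (j + 1) / (1 - q ^ (j + 1)) := by
  have := hsub_pos hq0 hq1 j
  positivity

lemma a_le_b {q : ℝ} (hq0 : 0 < q) (hq1 : q < 1) (j : ℕ) :
    ((j : ℝ) + 1) * q ^ (j + 1) / (1 - q ^ (j + 1)) ≤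
      ((j : ℝ) + 1) * q ^ (j + 1) / (1 - q) := by
  have hs := hsub_pos hq0 hq1 j
  have hnum : (0:ℝ) ≤ ((j : ℝ) + 1) * q ^ (j + 1) := by positivity
  have hq' : q ^ (j + 1) ≤ q := by
    have h1 : q ^ j ≤ 1 := pow_le_one₀ hq0.le hq1.le
    calc q ^ (j+1) = q * q ^ j := by ring
      _ ≤ q * 1 := by nlinarith
      _ = q := by ring
  exact div_le_div_of_nonneg_left hnum (by linarith) (by linarith)

lemma summable_a {q : ℝ} (hq0 : 0 < q) (hq1 : q < 1) :
    Summable (fun j : ℕ => ((j : ℝ) + 1) * q ^ (j + 1) / (1 - q ^ (j + 1))) :=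
  Summable.of_nonneg_of_le (a_nonneg hq0 hq1) (a_le_b hq0 hq1) (summable_b hq0 hq1)

lemma summable_LL {q : ℝ} (hq0 : 0 < q) (hq1 : q < 1) : Summable (LL q) :=
  Summable.of_nonneg_of_le (LL_nonneg hq0 hq1) (LL_le hq0 hq1) (summable_a hq0 hq1)

lemma tprod_eq_exp {q : ℝ} (hq0 : 0 < q) (hq1 : q < 1) :
    ∏' j : ℕ, (1 - q ^ (j + 1))⁻¹ ^ (j + 1) = Real.exp (∑' j, LL q j) := by
  have hs := (summable_LL hq0 hq1).hasSum
  have hp : HasProd (rexp ∘ LL q) (rexp (∑' j, LL q j)) := hs.rexp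
  have hfun : (rexp ∘ LL q) = fun j : ℕ => (1 - q ^ (j + 1))⁻¹ ^ (j + 1) := by
    funext j
    have hs' := hsub_pos hq0 hq1 j
    simp only [Function.comp, LL]
    rw [← Real.log_inv, show ((j : ℝ) + 1) = ((j + 1 : ℕ) : ℝ) by push_cast; ring,
      Real.exp_nat_mul, Real.exp_log (by positivity)]
  rw [hfun] at hp
  exact hp.tprod_eq

lemma geom_lb (q : ℝ) (hq0 : 0 ≤ q) (k : ℕ) :
    ((k : ℝ) + 1) * Real.sqrt q ^ k ≤ ∑ i ∈ Finset.range (k + 1), q ^ i := by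
  set r := Real.sqrt q with hr
  have hrq : r ^ 2 = q := Real.sq_sqrt hq0
  have hterm : ∀ i ∈ Finset.range (k + 1), 2 * r ^ k ≤ q ^ i + q ^ (k - i) := by
    intro i hi
    have hik : i ≤ k := by
      have := Finset.mem_range.mp hi; omega
    have h1 : q ^ i = (r ^ i) ^ 2 := by rw [← hrq]; ring
    have h2 : q ^ (k - i) = (r ^ (k - i)) ^ 2 := by rw [← hrq]; ring
    have h3 : r ^ i * r ^ (k - i) = r ^ k := by rw [← pow_add]; congr 1; omega
    nlinarith [sq_nonneg (r ^ i - r ^ (k - i))]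
  have hsum : ∑ i ∈ Finset.range (k + 1), (2 * r ^ k) ≤
      ∑ i ∈ Finset.range (k + 1), (q ^ i + q ^ (k - i)) := Finset.sum_le_sum hterm
  have hrefl : ∑ i ∈ Finset.range (k + 1), q ^ (k - i) = ∑ i ∈ Finset.range (k + 1), q ^ i := by
    have := Finset.sum_range_reflect (fun i => q ^ i) (k + 1)
    simpa using this
  rw [Finset.sum_add_distrib, hrefl, Finset.sum_const, Finset.card_range] at hsum
  have : ((k : ℝ) + 1) * (2 * r ^ k) ≤ 2 * ∑ i ∈ Finset.range (k + 1), q ^ i := by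
    rw [nsmul_eq_mul] at hsum
    push_cast at hsum
    linarith
  linarith

lemma denom_lb {q : ℝ} (hq0 : 0 < q) (hq1 : q < 1) (k : ℕ) :
    ((k : ℝ) + 1) ^ 2 * q ^ k * (1 - q) ^ 2 ≤ (1 - q ^ (k + 1)) ^ 2 := by
  have hg := geom_lb q hq0.le k
  have hrq : Real.sqrt q ^ 2 = q := Real.sq_sqrt hq0.le
  have hr0 : 0 ≤ Real.sqrt q := Real.sqrt_nonneg q
  have heq : (1 - q) * ∑ i ∈ Finset.range (k + 1), q ^ i = 1 - q ^ (k + 1) := by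
    linear_combination -geom_sum_mul q (k + 1)
  have hL0 : 0 ≤ ((k : ℝ) + 1) * Real.sqrt q ^ k := by positivity
  have hsq : (((k : ℝ) + 1) * Real.sqrt q ^ k) ^ 2 ≤
      (∑ i ∈ Finset.range (k + 1), q ^ i) ^ 2 := pow_le_pow_left₀ hL0 hg 2
  have hid : (((k : ℝ) + 1) * Real.sqrt q ^ k) ^ 2 = ((k : ℝ) + 1) ^ 2 * q ^ k := by
    rw [mul_pow, ← pow_mul, mul_comm k 2, pow_mul, hrq]
  have h2 : (1 - q ^ (k + 1)) ^ 2 = (1 - q) ^ 2 * (∑ i ∈ Finset.range (k + 1), q ^ i) ^ 2 := by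
    rw [← mul_pow, heq]
  rw [h2, ← hid]
  have h1q : (0:ℝ) ≤ (1 - q) ^ 2 := sq_nonneg _
  nlinarith [hsq]

lemma colbound {q : ℝ} (hq0 : 0 < q) (hq1 : q < 1) (k : ℕ) :
    (q ^ (k + 1) / (1 - q ^ (k + 1)) ^ 2) / ((k : ℝ) + 1) ≤
      1 / ((k : ℝ) + 1) ^ 3 * (1 / (1 - q) ^ 2) := by
  have hK : (0:ℝ) < (k : ℝ) + 1 := by positivity
  have hD := hsub_pos hq0 hq1 k
  have hD2 := denom_lb hq0 hq1 k
  have hqk : (0:ℝ) ≤ q ^ k := by positivity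
  have h1q : (0:ℝ) < 1 - q := by linarith
  rw [div_div, one_div_mul_one_div, div_le_div_iff₀ (by positivity)
    (mul_pos (pow_pos hK 3) (pow_pos h1q 2))]
  have h2 : q ^ (k + 1) ≤ q ^ k := by
    calc q ^ (k + 1) = q ^ k * q := by ring
      _ ≤ q ^ k * 1 := by nlinarith
      _ = q ^ k := by ring
  have h3 : ((k : ℝ) + 1) ^ 2 * q ^ k * (1 - q) ^ 2 * ((k : ℝ) + 1) ≤
      (1 - q ^ (k + 1)) ^ 2 * ((k : ℝ) + 1) := by nlinarith [hD2]
  calc q ^ (k + 1) * (((k : ℝ) + 1) ^ 3 * (1 - q) ^ 2)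
      ≤ q ^ k * (((k : ℝ) + 1) ^ 3 * (1 - q) ^ 2) :=
        mul_le_mul_of_nonneg_right h2 (by positivity)
    _ = ((k : ℝ) + 1) ^ 2 * q ^ k * (1 - q) ^ 2 * ((k : ℝ) + 1) := by ring
    _ ≤ (1 - q ^ (k + 1)) ^ 2 * ((k : ℝ) + 1) := h3
    _ = 1 * ((1 - q ^ (k + 1)) ^ 2 * ((k : ℝ) + 1)) := by ring

noncomputable def FF (q : ℝ) (j k : ℕ) : ℝ := ((j : ℝ) + 1) * (q ^ (j + 1)) ^ (k + 1) / ((k : ℝ) + 1)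

lemma FF_nonneg {q : ℝ} (hq0 : 0 < q) (j k : ℕ) : 0 ≤ FF q j k := by
  unfold FF; positivity

lemma row_hasSum {q : ℝ} (hq0 : 0 < q) (hq1 : q < 1) (j : ℕ) :
    HasSum (FF q j) (LL q j) := by
  have hx : |q ^ (j + 1)| < 1 := by
    rw [abs_of_pos (hpow_pos hq0 j)]; exact hpow_lt_one hq0 hq1 j
  have h := (hasSum_pow_div_log_of_abs_lt_one hx).mul_left ((j : ℝ) + 1)
  unfold FF LL
  simpa [mul_div_assoc] using h

lemma col_hasSum {q : ℝ} (hq0 : 0 < q) (hq1 : q < 1) (k : ℕ) :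
    HasSum (fun j => FF q j k) ((q ^ (k + 1) / (1 - q ^ (k + 1)) ^ 2) / ((k : ℝ) + 1)) := by
  set r := q ^ (k + 1) with hrdef
  have hr : ‖r‖ < 1 := by
    rw [Real.norm_eq_abs, abs_of_pos (hpow_pos hq0 k)]; exact hpow_lt_one hq0 hq1 k
  have h1 : HasSum (fun n : ℕ => (n : ℝ) * r ^ n) (r / (1 - r) ^ 2) :=
    hasSum_coe_mul_geometric_of_norm_lt_one hr
  have h2 : HasSum (fun n : ℕ => (((n + 1 : ℕ)) : ℝ) * r ^ (n + 1)) (r / (1 - r) ^ 2) := by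
    refine (hasSum_nat_add_iff (f := fun n : ℕ => (n : ℝ) * r ^ n) 1).mpr ?_
    simpa using h1
  have h3 := h2.div_const ((k : ℝ) + 1)
  have hFF : (fun j : ℕ => FF q j k) =
      (fun n : ℕ => (((n + 1 : ℕ)) : ℝ) * r ^ (n + 1) / ((k : ℝ) + 1)) := by
    funext j
    unfold FF
    rw [hrdef, ← pow_mul, ← pow_mul, mul_comm (j + 1) (k + 1)]
    push_cast
    ring
  rw [hFF]
  exact h3

lemma summable_FF {q : ℝ} (hq0 : 0 < q) (hq1 : q < 1) :
    Summable (Function.uncurry (FF q)) := by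
  refine (summable_prod_of_nonneg ?_).mpr ⟨fun j => (row_hasSum hq0 hq1 j).summable, ?_⟩
  · intro p; exact FF_nonneg hq0 p.1 p.2
  · have hfun : (fun j => ∑' k, FF q j k) = LL q :=
      funext fun j => (row_hasSum hq0 hq1 j).tsum_eq
    rw [show (fun j => ∑' k, Function.uncurry (FF q) (j, k)) = fun j => ∑' k, FF q j k from rfl,
      hfun]
    exact summable_LL hq0 hq1

lemma tsum_LL_eq {q : ℝ} (hq0 : 0 < q) (hq1 : q < 1) :
    ∑' j, LL q j = ∑' k : ℕ, (q ^ (k + 1) / (1 - q ^ (k + 1)) ^ 2) / ((k : ℝ) + 1) := by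
  have h1 : ∑' j, LL q j = ∑' (j) (k), FF q j k :=
    tsum_congr fun j => ((row_hasSum hq0 hq1 j).tsum_eq).symm
  have h2 : ∑' (k) (j), FF q j k = ∑' (j) (k), FF q j k :=
    Summable.tsum_comm' (summable_FF hq0 hq1) (fun j => (row_hasSum hq0 hq1 j).summable)
      (fun k => (col_hasSum hq0 hq1 k).summable)
  have h3 : ∑' (k) (j), FF q j k =
      ∑' k : ℕ, (q ^ (k + 1) / (1 - q ^ (k + 1)) ^ 2) / ((k : ℝ) + 1) :=
    tsum_congr fun k => (col_hasSum hq0 hq1 k).tsum_eq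
  rw [h1, ← h2, h3]

lemma summable_zeta : Summable (fun n : ℕ => 1 / ((n : ℝ) + 1) ^ 3) := by
  have h : Summable (fun n : ℕ => 1 / (n : ℝ) ^ 3) := summable_one_div_nat_pow.mpr (by norm_num)
  have h2 := (summable_nat_add_iff (f := fun n : ℕ => 1 / (n : ℝ) ^ 3) 1).mpr h
  simpa using h2

lemma tsum_LL_le_zeta {q : ℝ} (hq0 : 0 < q) (hq1 : q < 1) :
    ∑' j, LL q j ≤ (∑' n : ℕ, 1 / ((n : ℝ) + 1) ^ 3) / (1 - q) ^ 2 := by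
  rw [tsum_LL_eq hq0 hq1]
  have hg : Summable (fun k : ℕ => 1 / ((k : ℝ) + 1) ^ 3 * (1 / (1 - q) ^ 2)) :=
    summable_zeta.mul_right _
  have hcolnn : ∀ k : ℕ, 0 ≤ (q ^ (k + 1) / (1 - q ^ (k + 1)) ^ 2) / ((k : ℝ) + 1) := by
    intro k
    have := hsub_pos hq0 hq1 k
    positivity
  have hcs : Summable (fun k : ℕ => (q ^ (k + 1) / (1 - q ^ (k + 1)) ^ 2) / ((k : ℝ) + 1)) :=
    Summable.of_nonneg_of_le hcolnn (colbound hq0 hq1) hg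
  have h := Summable.tsum_le_tsum (colbound hq0 hq1) hcs hg
  calc ∑' k : ℕ, (q ^ (k + 1) / (1 - q ^ (k + 1)) ^ 2) / ((k : ℝ) + 1)
      ≤ ∑' k : ℕ, 1 / ((k : ℝ) + 1) ^ 3 * (1 / (1 - q) ^ 2) := h
    _ = (∑' n : ℕ, 1 / ((n : ℝ) + 1) ^ 3) * (1 / (1 - q) ^ 2) := tsum_mul_right
    _ = (∑' n : ℕ, 1 / ((n : ℝ) + 1) ^ 3) / (1 - q) ^ 2 := by ring

theorem product_bound_zeta_three (q : ℝ) (hq0 : 0 < q) (hq1 : q < 1) :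
    (∏' j : ℕ, (1 - q ^ (j + 1))⁻¹ ^ (j + 1) ≤
        Real.exp (∑' j : ℕ, (j + 1 : ℝ) * q ^ (j + 1) / (1 - q ^ (j + 1)))) ∧
      ∀ ε > (0 : ℝ), ∃ δ > (0 : ℝ), ∀ q' : ℝ, 1 - δ < q' → q' < 1 →
        ∏' j : ℕ, (1 - q' ^ (j + 1))⁻¹ ^ (j + 1) ≤
          Real.exp (((∑' n : ℕ, 1 / ((n : ℝ) + 1) ^ 3) + ε) / (1 - q') ^ 2) := by
  constructor
  · rw [tprod_eq_exp hq0 hq1]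
    exact Real.exp_le_exp.mpr
      (Summable.tsum_le_tsum (LL_le hq0 hq1) (summable_LL hq0 hq1) (summable_a hq0 hq1))
  · intro ε hε
    refine ⟨1, one_pos, fun q' h1 h2 => ?_⟩
    have hq0' : 0 < q' := by linarith
    rw [tprod_eq_exp hq0' h2]
    apply Real.exp_le_exp.mpr
    have hZ : 0 ≤ ∑' n : ℕ, 1 / ((n : ℝ) + 1) ^ 3 := tsum_nonneg (fun n => by positivity)
    have h3 := tsum_LL_le_zeta hq0' h2
    have hd : (0:ℝ) < (1 - q') ^ 2 := by
      have : (0:ℝ) < 1 - q' := by linarith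
      positivity
    have h4 : (∑' n : ℕ, 1 / ((n : ℝ) + 1) ^ 3) / (1 - q') ^ 2 ≤
        ((∑' n : ℕ, 1 / ((n : ℝ) + 1) ^ 3) + ε) / (1 - q') ^ 2 :=
      by gcongr <;> linarith
    linarith
end

section
/- Let 0 < q < 1. For any ε > 0 there is δ > 0 such that for all q with 1 - δ < q < 1, ∏_{j ≥ 1} (1 - q^j)^{-2} ≤ exp( (2ζ(2) + ε)/(1-q) ). -/
open Real

private lemma sum_neg_log_le_aux (q : ℝ) (hq0 : 0 < q) (hq1 : q < 1) (s : Finset ℕ) :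
    ∑ j ∈ s, -Real.log (1 - q ^ (j + 1)) ≤ (π ^ 2 / 6) / (1 - q) := by
  have h1q : (0 : ℝ) < 1 - q := by linarith
  have hpow : ∀ j : ℕ, q ^ (j + 1) < 1 := fun j =>
    pow_lt_one₀ hq0.le hq1 (show j + 1 ≠ 0 by omega)
  have hx : ∀ j : ℕ, |q ^ (j + 1)| < 1 := fun j => by
    rw [abs_of_pos (pow_pos hq0 _)]; exact hpow j
  have hA : ∀ j : ℕ, HasSum (fun n : ℕ => (q ^ (j + 1)) ^ (n + 1) / (n + 1))
      (-Real.log (1 - q ^ (j + 1))) := fun j =>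
    Real.hasSum_pow_div_log_of_abs_lt_one (hx j)
  have hS : HasSum (fun n : ℕ => ∑ j ∈ s, (q ^ (j + 1)) ^ (n + 1) / (n + 1))
      (∑ j ∈ s, -Real.log (1 - q ^ (j + 1))) := hasSum_sum (fun j _ => hA j)
  have h0 : HasSum (fun n : ℕ => (1 : ℝ) / ((n : ℝ) + 1) ^ 2) (π ^ 2 / 6) := by
    have h := hasSum_zeta_two
    rw [← hasSum_nat_add_iff' 1] at h
    simpa using h
  have hB : HasSum (fun n : ℕ => (1 : ℝ) / ((n : ℝ) + 1) ^ 2 * (1 / (1 - q)))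
      ((π ^ 2 / 6) * (1 / (1 - q))) := h0.mul_right _
  have hle : ∑ j ∈ s, -Real.log (1 - q ^ (j + 1)) ≤ (π ^ 2 / 6) * (1 / (1 - q)) := by
    refine hasSum_le (fun n => ?_) hS hB
    set r : ℝ := q ^ (n + 1) with hr_def
    have hr0 : 0 < r := pow_pos hq0 _
    have hr1 : r < 1 := hpow n
    have h1r : (0 : ℝ) < 1 - r := by linarith
    have hn1 : (0 : ℝ) < (n : ℝ) + 1 := by positivity
    -- rewrite terms
    have hterm : ∀ j : ℕ, (q ^ (j + 1)) ^ (n + 1) / (n + 1) = r ^ (j + 1) / ((n : ℝ) + 1) := by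
      intro j
      rw [hr_def, ← pow_mul, ← pow_mul, mul_comm (j + 1) (n + 1)]
    rw [Finset.sum_congr rfl fun j _ => hterm j, ← Finset.sum_div]
    -- geometric sum bound
    have hgeom : HasSum (fun j : ℕ => r ^ (j + 1)) ((1 - r)⁻¹ * r) := by
      have := (hasSum_geometric_of_lt_one hr0.le hr1).mul_right r
      simpa [pow_succ] using this
    have hsum_le : ∑ j ∈ s, r ^ (j + 1) ≤ (1 - r)⁻¹ * r := by
      refine Summable.sum_le_tsum s (fun j _ => (pow_pos hr0 _).le) hgeom.summable |>.trans_eq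
        hgeom.tsum_eq
    -- key inequality : r * ((n+1) * (1-q)) ≤ 1 - r
    have hkey : r * (((n : ℝ) + 1) * (1 - q)) ≤ 1 - r := by
      have hgs := geom_sum_mul q (n + 1)
      have hlb : ((n : ℝ) + 1) * q ^ (n + 1) ≤ ∑ i ∈ Finset.range (n + 1), q ^ i := by
        have : ∀ i ∈ Finset.range (n + 1), q ^ (n + 1) ≤ q ^ i := fun i hi =>
          pow_le_pow_of_le_one hq0.le hq1.le (Finset.mem_range.mp hi).le
        calc ((n : ℝ) + 1) * q ^ (n + 1)
            = ∑ _i ∈ Finset.range (n + 1), q ^ (n + 1) := by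
              rw [Finset.sum_const, Finset.card_range]; push_cast; ring
          _ ≤ ∑ i ∈ Finset.range (n + 1), q ^ i := Finset.sum_le_sum this
      nlinarith [hgs, hlb, h1q]
    have hstep : (1 - r)⁻¹ * r ≤ 1 / (((n : ℝ) + 1) * (1 - q)) := by
      rw [inv_mul_eq_div, div_le_div_iff₀ h1r (by positivity)]
      nlinarith [hkey]
    calc (∑ j ∈ s, r ^ (j + 1)) / ((n : ℝ) + 1)
        ≤ ((1 - r)⁻¹ * r) / ((n : ℝ) + 1) := by gcongr
      _ ≤ (1 / (((n : ℝ) + 1) * (1 - q))) / ((n : ℝ) + 1) := by gcongr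
      _ = 1 / ((n : ℝ) + 1) ^ 2 * (1 / (1 - q)) := by field_simp
  calc ∑ j ∈ s, -Real.log (1 - q ^ (j + 1)) ≤ (π ^ 2 / 6) * (1 / (1 - q)) := hle
    _ = (π ^ 2 / 6) / (1 - q) := by ring

theorem product_bound_zeta_two (q : ℝ) (hq0 : 0 < q) (hq1 : q < 1) :
    ∀ ε > (0 : ℝ), ∃ δ > (0 : ℝ), ∀ q' : ℝ, 1 - δ < q' → q' < 1 →
      ∏' j : ℕ, ((1 - q' ^ (j + 1))⁻¹) ^ 2 ≤
        Real.exp ((2 * (π ^ 2 / 6) + ε) / (1 - q')) := by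
  intro ε hε
  refine ⟨1 / 2, by norm_num, fun q' h1 h2 => ?_⟩
  have hq'0 : 0 < q' := by linarith
  have h1q : (0 : ℝ) < 1 - q' := by linarith
  have hpow : ∀ j : ℕ, 0 < 1 - q' ^ (j + 1) := fun j => by
    have := pow_lt_one₀ hq'0.le h2 (show j + 1 ≠ 0 by omega); linarith
  have hεle : (π ^ 2 / 6) / (1 - q') * 2 ≤ (2 * (π ^ 2 / 6) + ε) / (1 - q') := by
    rw [div_mul_eq_mul_div, div_le_div_iff₀ h1q h1q]
    have hπ : (0 : ℝ) < π ^ 2 / 6 := by positivity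
    nlinarith [h1q, hε]
  set f : ℕ → ℝ := fun j => ((1 - q' ^ (j + 1))⁻¹) ^ 2 with hf
  by_cases hm : Multipliable f
  · have key : ∀ s : Finset ℕ, ∏ j ∈ s, f j ≤ Real.exp ((2 * (π ^ 2 / 6) + ε) / (1 - q')) := by
      intro s
      have hfe : ∀ j : ℕ, f j = Real.exp (2 * (-Real.log (1 - q' ^ (j + 1)))) := by
        intro j
        rw [hf]
        have h2l : Real.exp (2 * (-Real.log (1 - q' ^ (j + 1)))) =
            (Real.exp (-Real.log (1 - q' ^ (j + 1)))) ^ 2 := by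
          rw [← Real.exp_nat_mul]; norm_num
        rw [h2l, Real.exp_neg, Real.exp_log (hpow j)]
      calc ∏ j ∈ s, f j
          = Real.exp (∑ j ∈ s, 2 * (-Real.log (1 - q' ^ (j + 1)))) := by
            rw [Real.exp_sum]; exact Finset.prod_congr rfl fun j _ => hfe j
        _ ≤ Real.exp ((2 * (π ^ 2 / 6) + ε) / (1 - q')) := by
            rw [Real.exp_le_exp]
            have := sum_neg_log_le_aux q' hq'0 h2 s
            calc ∑ j ∈ s, 2 * (-Real.log (1 - q' ^ (j + 1)))
                = (∑ j ∈ s, -Real.log (1 - q' ^ (j + 1))) * 2 := by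
                  rw [Finset.sum_mul]; exact Finset.sum_congr rfl fun j _ => by ring
              _ ≤ (π ^ 2 / 6) / (1 - q') * 2 := by nlinarith [this]
              _ ≤ (2 * (π ^ 2 / 6) + ε) / (1 - q') := hεle
    exact le_of_tendsto hm.hasProd (Filter.Eventually.of_forall key)
  · rw [tprod_eq_one_of_not_multipliable hm]
    exact Real.one_le_exp (by positivity)
end

section
/- Let p be prime and r ≥ 1. For every n ≥ 0, q^n / ∏_{j=1}^{n}(1 - q^j) = ∑_{m ≥ 1} q^{nm} · ∏_{j ≥ 1, j ≠ m} (1 - q^{j-m})^{-1}, where q = p^{-r}; in particular the series on the right converges. -/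
open Real Filter Finset Topology

namespace CLaux

noncomputable def Qp (q : ℝ) (m : ℕ) : ℝ := ∏ j ∈ Finset.range m, (1 - q ^ (j + 1))

noncomputable def c (q : ℝ) (m : ℕ) : ℝ := (-1) ^ m * q ^ (Nat.choose m 2) / Qp q m

variable {q : ℝ}

lemma pow_half (hq0 : 0 < q) (hq2 : q ≤ 1/2) (j : ℕ) : q ^ (j + 1) ≤ 1/2 := by
  calc q ^ (j + 1) ≤ q ^ 1 := pow_le_pow_of_le_one hq0.le (by linarith) (by omega)
  _ = q := pow_one q
  _ ≤ 1/2 := hq2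

lemma Qp_pos (hq0 : 0 < q) (hq2 : q ≤ 1/2) (m : ℕ) : 0 < Qp q m :=
  Finset.prod_pos (fun j _ => by have := pow_half hq0 hq2 j; linarith)

lemma Qp_ge (hq0 : 0 < q) (hq2 : q ≤ 1/2) (m : ℕ) : (1/2 : ℝ) ^ m ≤ Qp q m := by
  rw [Qp]
  calc (1/2 : ℝ) ^ m = ∏ _j ∈ Finset.range m, (1/2 : ℝ) := by
        rw [Finset.prod_const, Finset.card_range]
  _ ≤ ∏ j ∈ Finset.range m, (1 - q ^ (j + 1)) :=
      Finset.prod_le_prod (fun _ _ => by norm_num)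
        (fun j _ => by have := pow_half hq0 hq2 j; linarith)

lemma c_abs_le (hq0 : 0 < q) (hq2 : q ≤ 1/2) (m : ℕ) :
    |c q m| ≤ 2 ^ m * q ^ (Nat.choose m 2) := by
  have hQ := Qp_pos hq0 hq2 m
  have hQ2 := Qp_ge hq0 hq2 m
  have h2 : (0:ℝ) < (1/2) ^ m := by positivity
  rw [c, abs_div, abs_mul, abs_pow, abs_pow, abs_neg, abs_one, one_pow, one_mul,
    abs_of_pos hq0, abs_of_pos hQ]
  calc q ^ (Nat.choose m 2) / Qp q m ≤ q ^ (Nat.choose m 2) / (1/2) ^ m :=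
        div_le_div_of_nonneg_left (by positivity) h2 hQ2
  _ = 2 ^ m * q ^ (Nat.choose m 2) := by
        rw [div_eq_mul_inv, mul_comm]
        congr 1
        rw [← inv_pow]
        norm_num

lemma c_rec (hq0 : 0 < q) (hq2 : q ≤ 1/2) (m : ℕ) :
    c q (m + 1) * (1 - q ^ (m + 1)) = -q ^ m * c q m := by
  have hQ := (Qp_pos hq0 hq2 m).ne'
  have hQ1 : Qp q (m + 1) = Qp q m * (1 - q ^ (m + 1)) := Finset.prod_range_succ _ m
  have he : Nat.choose (m + 1) 2 = Nat.choose m 2 + m := by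
    rw [Nat.choose_succ_succ]
    simp [Nat.add_comm]
  have hne : (1 : ℝ) - q ^ (m + 1) ≠ 0 := by have := pow_half hq0 hq2 m; intro h; linarith [h]
  rw [c, c, hQ1, he, pow_add]
  field_simp
  ring

lemma cz_bound (hq0 : 0 < q) (hq2 : q ≤ 1/2) (m : ℕ) {z : ℝ} (hz0 : 0 ≤ z) (hz : z ≤ q) :
    |c q m * z ^ m| ≤ q⁻¹ * (1/2) ^ m := by
  have hqi : (2 : ℝ) ≤ q⁻¹ := by
    have := one_div_le_one_div_of_le hq0 hq2
    rw [one_div] at this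
    norm_num at this
    linarith
  rw [abs_mul, abs_pow, abs_of_nonneg hz0]
  rcases m with _ | k
  · simp [c, Qp]
    linarith
  · have h1 := c_abs_le hq0 hq2 (k + 1)
    have hek : q ^ (Nat.choose (k+1) 2) ≤ q ^ k := by
      apply pow_le_pow_of_le_one hq0.le (by linarith)
      rw [Nat.choose_succ_succ]
      simp [Nat.choose_one_right]
    have hzq : z ^ (k+1) ≤ q ^ (k+1) := pow_le_pow_left₀ hz0 hz _
    have h2q : (2*q) ^ (k+1) ≤ 1 := pow_le_one₀ (by positivity) (by linarith)
    have hqk : q ^ k ≤ (1/2 : ℝ) ^ k := pow_le_pow_left₀ hq0.le hq2 k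
    have hz0' : (0:ℝ) ≤ z ^ (k+1) := by positivity
    calc |c q (k+1)| * z ^ (k+1) ≤ (2 ^ (k+1) * q ^ (Nat.choose (k+1) 2)) * q ^ (k+1) := by
          apply mul_le_mul h1 hzq hz0' (by positivity)
    _ ≤ (2 ^ (k+1) * q ^ k) * q ^ (k+1) := by
          have : (0:ℝ) ≤ q ^ (k+1) := by positivity
          apply mul_le_mul_of_nonneg_right _ this
          exact mul_le_mul_of_nonneg_left hek (by positivity)
    _ = (2*q) ^ (k+1) * q ^ k := by ring
    _ ≤ 1 * q ^ k := mul_le_mul_of_nonneg_right h2q (by positivity)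
    _ = q ^ k := one_mul _
    _ ≤ (1/2 : ℝ) ^ k := hqk
    _ = 2 * (1/2 : ℝ) ^ (k+1) := by ring
    _ ≤ q⁻¹ * (1/2) ^ (k+1) := mul_le_mul_of_nonneg_right hqi (by positivity)

lemma summable_cz (hq0 : 0 < q) (hq2 : q ≤ 1/2) {z : ℝ} (hz0 : 0 ≤ z) (hz : z ≤ q) :
    Summable (fun m => c q m * z ^ m) := by
  apply Summable.of_norm_bounded
    (((summable_geometric_of_lt_one (by norm_num) (by norm_num : (1/2:ℝ) < 1))).mul_left q⁻¹)
  intro m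
  rw [Real.norm_eq_abs]
  exact cz_bound hq0 hq2 m hz0 hz

noncomputable def s (q z : ℝ) : ℝ := ∑' m, c q m * z ^ m

lemma s_hasSum (hq0 : 0 < q) (hq2 : q ≤ 1/2) {z : ℝ} (hz0 : 0 ≤ z) (hz : z ≤ q) :
    HasSum (fun m => c q m * z ^ m) (s q z) :=
  (summable_cz hq0 hq2 hz0 hz).hasSum

lemma s_feq (hq0 : 0 < q) (hq2 : q ≤ 1/2) {z : ℝ} (hz0 : 0 ≤ z) (hz : z ≤ q) :
    s q z = (1 - z) * s q (q * z) := by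
  have hqz0 : 0 ≤ q * z := by positivity
  have hqz : q * z ≤ q := by nlinarith
  have h1 : HasSum (fun m => c q m * (q * z) ^ m) (s q (q * z)) := s_hasSum hq0 hq2 hqz0 hqz
  have h2 : HasSum (fun m => z * (c q m * (q * z) ^ m)) (z * s q (q * z)) := h1.mul_left z
  set g : ℕ → ℝ := fun m => if m = 0 then 0 else z * (c q (m - 1) * (q * z) ^ (m - 1)) with hgdef
  have h3 : HasSum g (z * s q (q * z)) := by
    have hinj : Function.Injective (fun m : ℕ => m + 1) := fun a b h => by simpa using h
    have hzero : ∀ x, x ∉ Set.range (fun m : ℕ => m + 1) → g x = 0 := by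
      intro x hx
      have hx0 : x = 0 := by
        by_contra h
        exact hx ⟨x - 1, by simp; omega⟩
      simp [hgdef, hx0]
    have hcomp : (g ∘ fun m : ℕ => m + 1) = fun m => z * (c q m * (q * z) ^ m) := by
      funext m
      simp [hgdef]
    exact (hinj.hasSum_iff hzero).mp (hcomp ▸ h2)
  have h4 := h1.sub h3
  have h5 : (fun m => c q m * (q * z) ^ m - g m) = fun m => c q m * z ^ m := by
    funext m
    rcases m with _ | k
    · simp [hgdef]
    · have key := c_rec hq0 hq2 k
      simp only [hgdef, Nat.succ_ne_zero, if_false, Nat.add_sub_cancel]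
      linear_combination (-(z : ℝ) ^ (k + 1)) * key
  rw [h5] at h4
  have h6 := s_hasSum hq0 hq2 hz0 hz
  rw [h6.unique h4]
  ring

lemma s_iter (hq0 : 0 < q) (hq2 : q ≤ 1/2) {z : ℝ} (hz0 : 0 ≤ z) (hz : z ≤ q) (N : ℕ) :
    s q z = (∏ i ∈ Finset.range N, (1 - q ^ i * z)) * s q (q ^ N * z) := by
  induction N with
  | zero => simp
  | succ N ih =>
    have h0 : 0 ≤ q ^ N * z := by positivity
    have h1 : q ^ N * z ≤ q := by
      have : q ^ N ≤ 1 := pow_le_one₀ hq0.le (by linarith)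
      nlinarith
    have := s_feq hq0 hq2 h0 h1
    rw [ih, this, Finset.prod_range_succ]
    rw [show q * (q ^ N * z) = q ^ (N + 1) * z by ring]
    ring

lemma summable_log {f : ℕ → ℝ} (h0 : ∀ i, 0 ≤ f i) (h1 : ∀ i, f i ≤ 1/2) (hs : Summable f) :
    Summable (fun i => Real.log (1 - f i)) := by
  apply Summable.of_norm_bounded (hs.mul_left 2)
  intro i
  have h0i := h0 i
  have h1i := h1 i
  have hpos : (0:ℝ) < 1 - f i := by linarith
  rw [Real.norm_eq_abs, abs_of_nonpos (Real.log_nonpos (by linarith) (by linarith))]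
  have hlog : -Real.log (1 - f i) = Real.log (1 - f i)⁻¹ := (Real.log_inv _).symm
  have h3 := Real.log_le_sub_one_of_pos (inv_pos.mpr hpos)
  have hinv : (1 - f i)⁻¹ ≤ 1 + 2 * f i := by
    rw [inv_eq_one_div, div_le_iff₀ hpos]
    nlinarith
  rw [hlog]
  linarith

lemma hasProd_one_sub {f : ℕ → ℝ} (h0 : ∀ i, 0 ≤ f i) (h1 : ∀ i, f i ≤ 1/2) (hs : Summable f) :
    HasProd (fun i => 1 - f i) (Real.exp (∑' i, Real.log (1 - f i))) := by
  have hpos : ∀ i, (0:ℝ) < 1 - f i := fun i => by have := h1 i; linarith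
  have h := ((summable_log h0 h1 hs).hasSum).rexp
  have : (rexp ∘ fun i => Real.log (1 - f i)) = fun i => 1 - f i := by
    funext i
    simp [Real.exp_log (hpos i)]
  rwa [this] at h

lemma hasProd_one_sub_inv {f : ℕ → ℝ} (h0 : ∀ i, 0 ≤ f i) (h1 : ∀ i, f i ≤ 1/2)
    (hs : Summable f) :
    HasProd (fun i => (1 - f i)⁻¹) (Real.exp (-∑' i, Real.log (1 - f i))) := by
  have hpos : ∀ i, (0:ℝ) < 1 - f i := fun i => by have := h1 i; linarith
  have h := ((summable_log h0 h1 hs).hasSum).neg.rexp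
  have heq : (rexp ∘ fun i => -Real.log (1 - f i)) = fun i => (1 - f i)⁻¹ := by
    funext i
    simp [Real.exp_neg, Real.exp_log (hpos i)]
  rwa [heq] at h

lemma s_near (hq0 : 0 < q) (hq2 : q ≤ 1/2) {w : ℝ} (hw0 : 0 ≤ w) (hw : w ≤ q) :
    |s q w - 1| ≤ q⁻¹ * q⁻¹ * w := by
  have hsum := summable_cz hq0 hq2 hw0 hw
  have h0 : s q w = 1 + ∑' m, c q (m + 1) * w ^ (m + 1) := by
    rw [s, Summable.tsum_eq_zero_add hsum]
    congr 1
    simp [c, Qp]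
  have hbd : ∀ m : ℕ, ‖c q (m + 1) * w ^ (m + 1)‖ ≤ (q⁻¹ * q⁻¹ * w / 2) * (1/2) ^ m := by
    intro m
    have hc := cz_bound hq0 hq2 (m + 1) hq0.le (le_refl q)
    have habs : |c q (m + 1) * q ^ (m + 1)| = |c q (m + 1)| * q ^ (m + 1) := by
      rw [abs_mul, abs_pow, abs_of_pos hq0]
    rw [habs] at hc
    have hwle : w ^ (m + 1) ≤ q ^ m * w := by
      calc w ^ (m + 1) = w ^ m * w := pow_succ w m
      _ ≤ q ^ m * w := mul_le_mul_of_nonneg_right (pow_le_pow_left₀ hw0 hw m) hw0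
    rw [Real.norm_eq_abs, abs_mul, abs_pow, abs_of_nonneg hw0]
    have hq' : q ≠ 0 := hq0.ne'
    calc |c q (m + 1)| * w ^ (m + 1) ≤ |c q (m + 1)| * (q ^ m * w) :=
          mul_le_mul_of_nonneg_left hwle (abs_nonneg _)
    _ = (|c q (m + 1)| * q ^ (m + 1)) * w * q⁻¹ := by
          rw [pow_succ]
          field_simp
    _ ≤ (q⁻¹ * (1/2) ^ (m + 1)) * w * q⁻¹ := by
          apply mul_le_mul_of_nonneg_right
            (mul_le_mul_of_nonneg_right hc hw0) (by positivity)
    _ = (q⁻¹ * q⁻¹ * w / 2) * (1/2) ^ m := by ring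
  have hgsum : Summable (fun m : ℕ => (q⁻¹ * q⁻¹ * w / 2) * (1/2 : ℝ) ^ m) :=
    (summable_geometric_of_lt_one (by norm_num) (by norm_num)).mul_left _
  have hnorm : Summable (fun m => ‖c q (m + 1) * w ^ (m + 1)‖) :=
    Summable.of_nonneg_of_le (fun m => norm_nonneg _) hbd hgsum
  have h1 := norm_tsum_le_tsum_norm hnorm
  have h2 : ∑' m, ‖c q (m + 1) * w ^ (m + 1)‖ ≤ ∑' m : ℕ, (q⁻¹ * q⁻¹ * w / 2) * (1/2 : ℝ) ^ m :=
    Summable.tsum_le_tsum hbd hnorm hgsum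
  have h3 : ∑' m : ℕ, (q⁻¹ * q⁻¹ * w / 2) * (1/2 : ℝ) ^ m = q⁻¹ * q⁻¹ * w := by
    rw [tsum_mul_left, tsum_geometric_of_lt_one (by norm_num) (by norm_num)]
    norm_num
  rw [h0]
  simp only [add_sub_cancel_left]
  rw [Real.norm_eq_abs] at h1
  exact h1.trans (h2.trans_eq h3)

lemma euler (hq0 : 0 < q) (hq2 : q ≤ 1/2) {z : ℝ} (hz0 : 0 ≤ z) (hz : z ≤ q) :
    HasSum (fun m => c q m * z ^ m)
      (Real.exp (∑' i, Real.log (1 - q ^ i * z))) := by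
  have hq1 : q < 1 := by linarith
  have hf0 : ∀ i : ℕ, 0 ≤ q ^ i * z := fun i => by positivity
  have hf1 : ∀ i : ℕ, q ^ i * z ≤ 1/2 := by
    intro i
    have h1 : q ^ i ≤ 1 := pow_le_one₀ hq0.le hq1.le
    nlinarith
  have hsf : Summable (fun i : ℕ => q ^ i * z) :=
    (summable_geometric_of_lt_one hq0.le hq1).mul_right z
  have hW := hasProd_one_sub hf0 hf1 hsf
  have hT1 := hW.tendsto_prod_nat
  have hT2 : Tendsto (fun N => s q (q ^ N * z)) atTop (𝓝 1) := by
    have hb : ∀ N : ℕ, ‖s q (q ^ N * z) - 1‖ ≤ (q⁻¹ * q⁻¹ * z) * q ^ N := by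
      intro N
      have h0 : 0 ≤ q ^ N * z := by positivity
      have hle1 : q ^ N ≤ 1 := pow_le_one₀ hq0.le hq1.le
      have h1 : q ^ N * z ≤ q := by nlinarith
      have := s_near hq0 hq2 h0 h1
      rw [Real.norm_eq_abs]
      calc |s q (q ^ N * z) - 1| ≤ q⁻¹ * q⁻¹ * (q ^ N * z) := this
      _ = (q⁻¹ * q⁻¹ * z) * q ^ N := by ring
    have hg : Tendsto (fun N : ℕ => (q⁻¹ * q⁻¹ * z) * q ^ N) atTop (𝓝 0) := by
      have := (tendsto_pow_atTop_nhds_zero_of_lt_one hq0.le hq1).const_mul (q⁻¹ * q⁻¹ * z)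
      simpa using this
    have hz0' := squeeze_zero_norm hb hg
    have := hz0'.add_const 1
    simpa using this
  have hT3 := hT1.mul hT2
  have hconst : (fun N => (∏ i ∈ Finset.range N, (1 - q ^ i * z)) * s q (q ^ N * z))
      = fun _ => s q z := by
    funext N
    exact (s_iter hq0 hq2 hz0 hz N).symm
  rw [hconst] at hT3
  have hval : s q z = Real.exp (∑' i, Real.log (1 - q ^ i * z)) * 1 :=
    tendsto_nhds_unique tendsto_const_nhds hT3
  rw [mul_one] at hval
  exact hval ▸ s_hasSum hq0 hq2 hz0 hz

lemma hfin (hq0 : 0 < q) (hq2 : q ≤ 1/2) :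
    ∀ k : ℕ, ∏ j ∈ Finset.range k, (1 - q ^ (-((j:ℤ) + 1)))⁻¹ = c q k * q ^ k := by
  intro k
  induction k with
  | zero => simp [c, Qp]
  | succ k ih =>
    rw [Finset.prod_range_succ, ih]
    have key := c_rec hq0 hq2 k
    have hzp : q ^ (-((k:ℤ) + 1)) = ((q : ℝ) ^ (k + 1))⁻¹ := by
      rw [show -((k:ℤ) + 1) = -((k + 1 : ℕ) : ℤ) by push_cast; ring, zpow_neg, zpow_natCast]
    rw [hzp]
    have ha0 : (q : ℝ) ^ (k + 1) ≠ 0 := by positivity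
    have hhalf := pow_half hq0 hq2 k
    have ha1 : (1 : ℝ) - q ^ (k + 1) ≠ 0 := by intro h; linarith
    have hlt : (q : ℝ) ^ (k + 1) < 1 := by linarith
    have hgt : (1 : ℝ) < ((q : ℝ) ^ (k + 1))⁻¹ := (one_lt_inv₀ (by positivity)).mpr hlt
    have hb : (1 : ℝ) - ((q : ℝ) ^ (k + 1))⁻¹ ≠ 0 := by intro h; linarith
    have hy : 1 - ((q : ℝ) ^ (k + 1))⁻¹ = -(1 - q ^ (k + 1)) / q ^ (k + 1) := by
      field_simp
      ring
    rw [hy, inv_div, div_neg, ← neg_div]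
    field_simp
    linear_combination (-1 : ℝ) * key

lemma hasProd_tail (hq0 : 0 < q) (hq2 : q ≤ 1/2) :
    HasProd (fun i : ℕ => 1 - q ^ (i + 1))
      (Real.exp (∑' i : ℕ, Real.log (1 - q ^ (i + 1)))) := by
  apply hasProd_one_sub (fun i => by positivity) (fun i => pow_half hq0 hq2 i)
  have h := (summable_geometric_of_lt_one hq0.le (by linarith : q < 1)).mul_right q
  exact h.congr (fun i => (pow_succ q i).symm)

lemma hasProd_tail_inv (hq0 : 0 < q) (hq2 : q ≤ 1/2) :
    HasProd (fun i : ℕ => (1 - q ^ (i + 1))⁻¹)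
      (Real.exp (-∑' i : ℕ, Real.log (1 - q ^ (i + 1)))) := by
  apply hasProd_one_sub_inv (fun i => by positivity) (fun i => pow_half hq0 hq2 i)
  have h := (summable_geometric_of_lt_one hq0.le (by linarith : q < 1)).mul_right q
  exact h.congr (fun i => (pow_succ q i).symm)

lemma hasProd_shift (hq0 : 0 < q) (hq2 : q ≤ 1/2) (n : ℕ) :
    HasProd (fun i : ℕ => 1 - q ^ i * q ^ (n + 1))
      (Real.exp (∑' i : ℕ, Real.log (1 - q ^ i * q ^ (n + 1)))) := by
  have hq1 : q < 1 := by linarith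
  have h1 : ∀ i : ℕ, q ^ i * q ^ (n + 1) ≤ 1/2 := by
    intro i
    have h1 : q ^ i ≤ 1 := pow_le_one₀ hq0.le hq1.le
    have h2 := pow_half hq0 hq2 n
    have h3 : (0:ℝ) ≤ q ^ (n+1) := by positivity
    nlinarith
  exact hasProd_one_sub (fun i => by positivity) h1
    ((summable_geometric_of_lt_one hq0.le hq1).mul_right _)

lemma split (hq0 : 0 < q) (hq2 : q ≤ 1/2) (n : ℕ) :
    Real.exp (∑' i : ℕ, Real.log (1 - q ^ (i + 1)))
      = Qp q n * Real.exp (∑' i : ℕ, Real.log (1 - q ^ i * q ^ (n + 1))) := by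
  have hW := hasProd_shift hq0 hq2 n
  have hshift : (fun i : ℕ => 1 - q ^ i * q ^ (n + 1)) = fun i : ℕ => 1 - q ^ ((i + n) + 1) := by
    funext i
    rw [← pow_add]
    congr 2
  rw [hshift] at hW
  set g2 : ℕ → ℝ := fun i => if i < n then 1 else 1 - q ^ (i + 1) with hg2
  have hinj : Function.Injective (fun i : ℕ => i + n) := fun a b h => by simpa using h
  have hone : ∀ x, x ∉ Set.range (fun i : ℕ => i + n) → g2 x = 1 := by
    intro x hx
    have hxn : x < n := by by_contra h; exact hx ⟨x - n, by simp; omega⟩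
    simp [hg2, hxn]
  have hcomp : (g2 ∘ fun i : ℕ => i + n) = fun i : ℕ => 1 - q ^ ((i + n) + 1) := by
    funext i
    have hge : ¬(i + n < n) := by omega
    simp [hg2, hge]
  have hg2p : HasProd g2 (Real.exp (∑' i : ℕ, Real.log (1 - q ^ i * q ^ (n + 1)))) :=
    (hinj.hasProd_iff hone).mp (hcomp ▸ hW)
  set g1 : ℕ → ℝ := fun i => if i < n then 1 - q ^ (i + 1) else 1 with hg1
  have hg1p : HasProd g1 (Qp q n) := by
    have h := hasProd_prod_of_ne_finset_one (s := Finset.range n) (f := g1) (L := SummationFilter.unconditional ℕ)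
      (fun b hb => by simp only [hg1]; rw [if_neg (by simpa using hb)])
    have hv : ∏ b ∈ Finset.range n, g1 b = Qp q n :=
      Finset.prod_congr rfl (fun i hi => by simp [hg1, Finset.mem_range.mp hi])
    rwa [hv] at h
  have hmul := hg1p.mul hg2p
  have hfun : (fun i => g1 i * g2 i) = fun i : ℕ => 1 - q ^ (i + 1) := by
    funext i
    by_cases h : i < n <;> simp [hg1, hg2, h]
  rw [hfun] at hmul
  exact (hasProd_tail hq0 hq2).unique hmul

lemma tprod_eval (hq0 : 0 < q) (hq2 : q ≤ 1/2) (m : ℕ) :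
    HasProd (fun j : ℕ => if j + 1 = m + 1 then (1:ℝ) else (1 - q ^ ((j:ℤ) + 1 - ((m:ℤ) + 1)))⁻¹)
      ((c q m * q ^ m) * Real.exp (-∑' i : ℕ, Real.log (1 - q ^ (i + 1)))) := by
  set G := fun j : ℕ => if j + 1 = m + 1 then (1:ℝ) else (1 - q ^ ((j:ℤ) + 1 - ((m:ℤ) + 1)))⁻¹
    with hG
  set g1 : ℕ → ℝ := fun j => if j < m + 1 then G j else 1 with hg1
  set g2 : ℕ → ℝ := fun j => if j < m + 1 then 1 else G j with hg2
  have hg1p : HasProd g1 (c q m * q ^ m) := by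
    have h := hasProd_prod_of_ne_finset_one (s := Finset.range (m + 1)) (f := g1) (L := SummationFilter.unconditional ℕ)
      (fun b hb => by simp only [hg1]; rw [if_neg (by simpa using hb)])
    have hv : ∏ b ∈ Finset.range (m + 1), g1 b = c q m * q ^ m := by
      have hv1 : ∏ b ∈ Finset.range (m + 1), g1 b = ∏ b ∈ Finset.range (m + 1), G b :=
        Finset.prod_congr rfl (fun i hi => by simp [hg1, Finset.mem_range.mp hi, Nat.lt_succ_iff.mp (Finset.mem_range.mp hi)])
      rw [hv1, Finset.prod_range_succ]
      have hGm : G m = 1 := by simp [hG]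
      rw [hGm, mul_one]
      have h1 : ∏ j ∈ Finset.range m, G j = ∏ j ∈ Finset.range m, G (m - 1 - j) :=
        (Finset.prod_range_reflect G m).symm
      have h2 : ∀ j ∈ Finset.range m, G (m - 1 - j) = (1 - q ^ (-((j:ℤ) + 1)))⁻¹ := by
        intro j hj
        have hj' := Finset.mem_range.mp hj
        have hne : ¬(m - 1 - j + 1 = m + 1) := by omega
        simp only [hG, if_neg hne]
        congr 2
        have : ((m - 1 - j : ℕ) : ℤ) = (m : ℤ) - 1 - (j : ℤ) := by
          omega
        rw [this]
        ring_nf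
      rw [h1, Finset.prod_congr rfl h2, hfin hq0 hq2 m]
    rwa [hv] at h
  have hg2p : HasProd g2 (Real.exp (-∑' i : ℕ, Real.log (1 - q ^ (i + 1)))) := by
    have hPinv := hasProd_tail_inv hq0 hq2
    have hinj : Function.Injective (fun i : ℕ => i + (m + 1)) := fun a b h => by simpa using h
    have hone : ∀ x, x ∉ Set.range (fun i : ℕ => i + (m + 1)) → g2 x = 1 := by
      intro x hx
      have hxn : x < m + 1 := by by_contra h; exact hx ⟨x - (m + 1), by simp; omega⟩
      simp [hg2, hxn, Nat.lt_succ_iff.mp hxn]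
    have hcomp : (g2 ∘ fun i : ℕ => i + (m + 1)) = fun i : ℕ => (1 - q ^ (i + 1))⁻¹ := by
      funext i
      have hge : ¬(i + (m + 1) < m + 1) := by omega
      have hne : ¬(i + (m + 1) + 1 = m + 1) := by omega
      simp only [Function.comp_apply, hg2, if_neg hge, hG, if_neg hne]
      congr 2
      rw [show ((i + (m + 1) : ℕ) : ℤ) + 1 - ((m:ℤ) + 1) = ((i + 1 : ℕ) : ℤ) by push_cast; ring,
        zpow_natCast]
    exact (hinj.hasProd_iff hone).mp (hcomp ▸ hPinv)
  have hmul := hg1p.mul hg2p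
  have hfun : (fun j => g1 j * g2 j) = G := by
    funext j
    by_cases h : j < m + 1 <;> simp only [hg1, hg2, h, ↓reduceIte, mul_one, one_mul]
  rwa [hfun] at hmul

end CLaux

theorem nilpotent_cohen_lenstra_identity (p r : ℕ) (hp : p.Prime) (hr : 1 ≤ r)
    (q : ℝ) (hq : q = (p : ℝ) ^ (-(r : ℤ))) (n : ℕ) :
    HasSum
      (fun m : ℕ =>
        q ^ (n * (m + 1)) *
          ∏' j : ℕ, (if j + 1 = m + 1 then 1 else (1 - q ^ ((j : ℤ) + 1 - (m + 1)))⁻¹))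
      (q ^ n / ∏ j ∈ Finset.Icc 1 n, (1 - q ^ j)) := by
  have hp2 : (2 : ℝ) ≤ (p : ℝ) := by exact_mod_cast hp.two_le
  have hp0 : (0 : ℝ) < (p : ℝ) := by linarith
  have hpr : (2 : ℝ) ≤ (p : ℝ) ^ r := by
    calc (2 : ℝ) = 2 ^ 1 := (pow_one 2).symm
    _ ≤ 2 ^ r := pow_le_pow_right₀ (by norm_num) hr
    _ ≤ (p : ℝ) ^ r := pow_le_pow_left₀ (by norm_num) hp2 r
  have hqe : q = ((p : ℝ) ^ r)⁻¹ := by rw [hq, zpow_neg, zpow_natCast]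
  have hq0 : 0 < q := by rw [hqe]; positivity
  have hq2 : q ≤ 1 / 2 := by
    rw [hqe]
    rw [inv_le_comm₀ (by positivity) (by norm_num)]
    norm_num
    linarith
  have hIcc : ∏ j ∈ Finset.Icc 1 n, (1 - q ^ j) = CLaux.Qp q n := by
    induction n with
    | zero => simp [CLaux.Qp]
    | succ k ih =>
      rw [Finset.prod_Icc_succ_top (by omega), ih, CLaux.Qp, CLaux.Qp, Finset.prod_range_succ]
  have hz0 : (0 : ℝ) ≤ q ^ (n + 1) := by positivity
  have hz : q ^ (n + 1) ≤ q := by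
    calc q ^ (n + 1) ≤ q ^ 1 := pow_le_pow_of_le_one hq0.le (by linarith) (by omega)
    _ = q := pow_one q
  have hE := CLaux.euler hq0 hq2 hz0 hz
  have hsplit := CLaux.split hq0 hq2 n
  have htpe : ∀ m : ℕ,
      (∏' j : ℕ, (if j + 1 = m + 1 then (1:ℝ) else (1 - q ^ ((j : ℤ) + 1 - (m + 1)))⁻¹))
        = (CLaux.c q m * q ^ m) *
            Real.exp (-∑' i : ℕ, Real.log (1 - q ^ (i + 1))) := by
    intro m
    exact (CLaux.tprod_eval hq0 hq2 m).tprod_eq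
  have hfeq : (fun m : ℕ =>
      q ^ (n * (m + 1)) *
        ∏' j : ℕ, (if j + 1 = m + 1 then (1:ℝ) else (1 - q ^ ((j : ℤ) + 1 - (m + 1)))⁻¹))
      = fun m : ℕ => (q ^ n * Real.exp (-∑' i : ℕ, Real.log (1 - q ^ (i + 1))))
          * (CLaux.c q m * (q ^ (n + 1)) ^ m) := by
    funext m
    rw [htpe m, ← pow_mul]
    rw [show n * (m + 1) = n * m + n by ring, show (n + 1) * m = n * m + m by ring,
      pow_add, pow_add]
    ring
  rw [hfeq, hIcc]
  have final := hE.mul_left (q ^ n * Real.exp (-∑' i : ℕ, Real.log (1 - q ^ (i + 1))))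
  have hval : (q ^ n * Real.exp (-∑' i : ℕ, Real.log (1 - q ^ (i + 1))))
      * Real.exp (∑' i : ℕ, Real.log (1 - q ^ i * q ^ (n + 1)))
      = q ^ n / CLaux.Qp q n := by
    rw [Real.exp_neg, hsplit]
    have h1 : CLaux.Qp q n ≠ 0 := (CLaux.Qp_pos hq0 hq2 n).ne'
    have h2 : Real.exp (∑' i : ℕ, Real.log (1 - q ^ i * q ^ (n + 1))) ≠ 0 := (Real.exp_pos _).ne'
    field_simp
    ring
  rw [← hval]
  exact final
end
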